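/- In a 2-dimensional C-WMMG, if A_1(N) ∩ A_2(N) ≠ ∅, then every minimal winning coalition equals A_1(N) or A_2(N); in particular there are at most two minimal winning coalitions. -/

import Mathlib

/-- Competitive power of a coalition in a 2-dimensional C-WMMG with weights `w1, w2`. -/
def q {P : Type*} [DecidableEq P] (w1 w2 : P → ℕ) (C : Finset P) : ℕ :=
  C.sup w1 + C.sup w2

/-- A coalition is winning iff its power exceeds that of its complement. -/
def Winning {P : Type*} [Fintype P] [DecidableEq P] (w1 w2 : P → ℕ) (C : Finset P) : Prop :=
  q w1 w2 Cᶜ < q w1 w2 C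

/-- A minimal winning coalition: winning, and every proper subset is losing. -/
def MWC {P : Type*} [Fintype P] [DecidableEq P] (w1 w2 : P → ℕ) (C : Finset P) : Prop :=
  Winning w1 w2 C ∧ ∀ D ⊂ C, ¬ Winning w1 w2 D

/-- `Aset w C` is the set of members of `C` whose `w`-weight attains the maximum over `C`. -/
def Aset {P : Type*} [DecidableEq P] (w : P → ℕ) (C : Finset P) : Finset P :=
  C.filter (fun j => w j = C.sup w)

private lemma aset_win {P : Type*} [Fintype P] [DecidableEq P]
    (w1 w2 : P → ℕ) (j : P) (hj1 : w1 j = Finset.univ.sup w1)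
    (hj2 : w2 j = Finset.univ.sup w2) (hpos : 0 < Finset.univ.sup w1) :
    Winning w1 w2 (Aset w1 Finset.univ) := by
  set M1 := Finset.univ.sup w1 with hM1
  set M2 := Finset.univ.sup w2 with hM2
  set A1 := Aset w1 Finset.univ with hA1
  have hjA : j ∈ A1 := by simp [hA1, Aset, hj1]; exact hM1
  have hs1 : A1.sup w1 = M1 := le_antisymm (Finset.sup_mono (Finset.subset_univ _))
    (hj1 ▸ Finset.le_sup hjA)
  have hs2 : A1.sup w2 = M2 := le_antisymm (Finset.sup_mono (Finset.subset_univ _))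
    (hj2 ▸ Finset.le_sup hjA)
  have hc1 : A1ᶜ.sup w1 < M1 := by
    rw [Finset.sup_lt_iff hpos]
    intro x hx
    have hxA : x ∉ A1 := by simpa using hx
    have hne : w1 x ≠ M1 := by
      intro h; exact hxA (by simp [hA1, Aset, h]; exact hM1)
    exact lt_of_le_of_ne (Finset.le_sup (Finset.mem_univ x)) hne
  have hc2 : A1ᶜ.sup w2 ≤ M2 := Finset.sup_mono (Finset.subset_univ _)
  unfold Winning q
  omega

private lemma mwc_key {P : Type*} [Fintype P] [DecidableEq P]
    (w1 w2 : P → ℕ) (j : P) (hj1 : w1 j = Finset.univ.sup w1)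
    (hj2 : w2 j = Finset.univ.sup w2) :
    ∀ C : Finset P, MWC w1 w2 C →
      C = Aset w1 Finset.univ ∨ C = Aset w2 Finset.univ := by
  intro C ⟨hw, hmin⟩
  set M1 := Finset.univ.sup w1 with hM1
  set M2 := Finset.univ.sup w2 with hM2
  have hCle1 : C.sup w1 ≤ M1 := Finset.sup_mono (Finset.subset_univ _)
  have hCle2 : C.sup w2 ≤ M2 := Finset.sup_mono (Finset.subset_univ _)
  have hcc1 : Cᶜ.sup w1 ≤ M1 := Finset.sup_mono (Finset.subset_univ _)
  have hcc2 : Cᶜ.sup w2 ≤ M2 := Finset.sup_mono (Finset.subset_univ _)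
  have hjC : j ∈ C := by
    by_contra hjn
    have hjc : j ∈ Cᶜ := Finset.mem_compl.mpr hjn
    have h1 : M1 ≤ Cᶜ.sup w1 := hj1 ▸ Finset.le_sup hjc
    have h2 : M2 ≤ Cᶜ.sup w2 := hj2 ▸ Finset.le_sup hjc
    have := hw
    unfold Winning q at this
    omega
  have hw' := hw
  unfold Winning q at hw'
  -- one of the complement sups is strictly below the max
  have hcase : Cᶜ.sup w1 < M1 ∨ Cᶜ.sup w2 < M2 := by omega
  rcases hcase with h1 | h2
  · left
    have hpos : 0 < M1 := Nat.pos_of_ne_zero (by omega)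
    have hsub : Aset w1 Finset.univ ⊆ C := by
      intro x hx
      have hxv : w1 x = M1 := (Finset.mem_filter.mp hx).2
      by_contra hxn
      have : w1 x ≤ Cᶜ.sup w1 := Finset.le_sup (Finset.mem_compl.mpr hxn)
      omega
    have hwin := aset_win w1 w2 j hj1 hj2 hpos
    by_cases heq : Aset w1 Finset.univ = C
    · exact heq.symm
    · exact absurd hwin (hmin _ (Finset.ssubset_iff_subset_ne.mpr ⟨hsub, heq⟩))
  · right
    have hpos : 0 < M2 := Nat.pos_of_ne_zero (by omega)
    have hsub : Aset w2 Finset.univ ⊆ C := by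
      intro x hx
      have hxv : w2 x = M2 := (Finset.mem_filter.mp hx).2
      by_contra hxn
      have : w2 x ≤ Cᶜ.sup w2 := Finset.le_sup (Finset.mem_compl.mpr hxn)
      omega
    have hwin := aset_win w2 w1 j hj2 hj1 hpos
    have hwin' : Winning w1 w2 (Aset w2 Finset.univ) := by
      unfold Winning q at hwin ⊢; omega
    by_cases heq : Aset w2 Finset.univ = C
    · exact heq.symm
    · exact absurd hwin' (hmin _ (Finset.ssubset_iff_subset_ne.mpr ⟨hsub, heq⟩))

/-- In a 2-dimensional C-WMMG, if `A_1(N) ∩ A_2(N) ≠ ∅`, then every minimal winning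
coalition equals `A_1(N)` or `A_2(N)`; in particular there are at most two minimal
winning coalitions. -/
theorem mwc_of_A1N_inter_A2N_nonempty {P : Type*} [Fintype P] [DecidableEq P]
    (w1 w2 : P → ℕ)
    (hmeet : (Aset w1 Finset.univ ∩ Aset w2 Finset.univ).Nonempty) :
    (∀ C : Finset P, MWC w1 w2 C →
      C = Aset w1 Finset.univ ∨ C = Aset w2 Finset.univ) ∧
    {C : Finset P | MWC w1 w2 C}.ncard ≤ 2 := by
  obtain ⟨j, hj⟩ := hmeet
  rw [Finset.mem_inter] at hj
  have hj1 : w1 j = Finset.univ.sup w1 := (Finset.mem_filter.mp hj.1).2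
  have hj2 : w2 j = Finset.univ.sup w2 := (Finset.mem_filter.mp hj.2).2
  have key := mwc_key w1 w2 j hj1 hj2
  refine ⟨key, ?_⟩
  have hsub : {C : Finset P | MWC w1 w2 C} ⊆
      {Aset w1 Finset.univ, Aset w2 Finset.univ} := by
    intro C hC
    rcases key C hC with h | h <;> simp [h]
  calc {C : Finset P | MWC w1 w2 C}.ncard
      ≤ ({Aset w1 Finset.univ, Aset w2 Finset.univ} : Set (Finset P)).ncard :=
        Set.ncard_le_ncard hsub ((Set.finite_singleton _).insert _)
    _ ≤ 2 := by
        calc ({Aset w1 Finset.univ, Aset w2 Finset.univ} : Set (Finset P)).ncard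
            ≤ ({Aset w2 Finset.univ} : Set (Finset P)).ncard + 1 := Set.ncard_insert_le _ _
          _ ≤ 2 := by rw [Set.ncard_singleton]
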